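/- Let n, k be positive integers, β₁ ∈ (0, n/k), and φ(τ) = (1/k)(τ^n-1)/τ^{n-1} + ((β₁-n/k)/(n+1))(τ^{n+1}-1)/τ^{n-1}. Then for any T > 1 with φ(T) = 0, one has (1/k - β₂)·T^n = β₁ + 1/k, where -β₂ := φ'(T). -/

import Mathlib

/-- Profile identity: if `φ(τ) = (1/k)(τ^n-1)/τ^{n-1} + ((β₁-n/k)/(n+1))(τ^{n+1}-1)/τ^{n-1}`,
`T > 1` satisfies `φ(T) = 0`, and `β₂ := -φ'(T)`, then `(1/k - β₂)·T^n = β₁ + 1/k`. -/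
theorem stmt2 (n k : ℕ) (hn : 1 ≤ n) (hk : 1 ≤ k) (β₁ : ℝ)
    (hβ₁ : β₁ ∈ Set.Ioo 0 ((n : ℝ) / k))
    (φ : ℝ → ℝ)
    (hφ : ∀ τ : ℝ, φ τ = (1 / (k : ℝ)) * (τ ^ n - 1) / τ ^ (n - 1)
        + ((β₁ - (n : ℝ) / k) / (n + 1)) * (τ ^ (n + 1) - 1) / τ ^ (n - 1))
    (T : ℝ) (hT : 1 < T) (hroot : φ T = 0)
    (β₂ : ℝ) (hβ₂ : -β₂ = deriv φ T) :
    (1 / (k : ℝ) - β₂) * T ^ n = β₁ + 1 / k := by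
  obtain ⟨m, rfl⟩ : ∃ m, n = m + 1 := ⟨n - 1, (Nat.succ_pred_eq_of_pos hn).symm⟩
  have hφ' : φ = fun τ : ℝ => (1 / (k : ℝ)) * (τ ^ (m+1) - 1) / τ ^ m
        + ((β₁ - ((m:ℝ)+1) / k) / ((m:ℝ) + 1 + 1)) * (τ ^ (m + 2) - 1) / τ ^ m := by
    funext τ
    rw [hφ τ]
    norm_num
  set A : ℝ := 1 / (k : ℝ) with hA
  set B : ℝ := (β₁ - ((m:ℝ)+1) / k) / ((m:ℝ) + 1 + 1) with hB
  have hT0 : T ≠ 0 := by positivity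
  have hTm : T ^ m ≠ 0 := pow_ne_zero _ hT0
  have hk0 : (k:ℝ) ≠ 0 := Nat.cast_ne_zero.mpr (by omega)
  have hpow : (m:ℝ) * T ^ (m - 1) * T = m * T ^ m := by
    cases m with
    | zero => simp
    | succ j => rw [Nat.add_sub_cancel]; ring
  -- derivative computation
  have hd1 : HasDerivAt (fun τ : ℝ => A * (τ ^ (m+1) - 1) / τ ^ m)
      (((A * (((m:ℝ)+1) * T ^ m)) * T ^ m - A * (T ^ (m+1) - 1) * ((m:ℝ) * T ^ (m-1))) / (T ^ m) ^ 2) T := by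
    have h1 : HasDerivAt (fun τ : ℝ => A * (τ ^ (m+1) - 1)) (A * (((m:ℝ)+1) * T ^ m)) T := by
      have := ((hasDerivAt_pow (m+1) T).sub_const 1).const_mul A
      simpa using this
    exact h1.div (hasDerivAt_pow m T) hTm
  have hd2 : HasDerivAt (fun τ : ℝ => B * (τ ^ (m+2) - 1) / τ ^ m)
      (((B * (((m:ℝ)+2) * T ^ (m+1))) * T ^ m - B * (T ^ (m+2) - 1) * ((m:ℝ) * T ^ (m-1))) / (T ^ m) ^ 2) T := by
    have h1 : HasDerivAt (fun τ : ℝ => B * (τ ^ (m+2) - 1)) (B * (((m:ℝ)+2) * T ^ (m+1))) T := by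
      have := ((hasDerivAt_pow (m+2) T).sub_const 1).const_mul B
      simpa using this
    exact h1.div (hasDerivAt_pow m T) hTm
  have hderiv : deriv φ T
      = ((A * (((m:ℝ)+1) * T ^ m)) * T ^ m - A * (T ^ (m+1) - 1) * ((m:ℝ) * T ^ (m-1))) / (T ^ m) ^ 2
      + ((B * (((m:ℝ)+2) * T ^ (m+1))) * T ^ m - B * (T ^ (m+2) - 1) * ((m:ℝ) * T ^ (m-1))) / (T ^ m) ^ 2 := by
    rw [hφ']
    have := (hd1.add hd2).deriv
    exact this
  -- root equation
  have h1 : A * (T ^ (m+1) - 1) + B * (T ^ (m+2) - 1) = 0 := by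
    have := hroot
    rw [hφ' ] at this
    field_simp at this
    linarith [this]
  -- simplified derivative
  have key : -β₂ = A * ((m:ℝ)+1) + B * ((m:ℝ)+2) * T := by
    rw [hβ₂, hderiv]
    have h2 : A * (T ^ (m+1) - 1) = - (B * (T ^ (m+2) - 1)) := by linarith
    rw [h2]
    field_simp
    ring_nf
  have hBeq : B * ((m:ℝ)+2) = β₁ - ((m:ℝ)+1) * A := by
    rw [hB, hA]
    field_simp
    ring
  have hβ₂' : β₂ = -(A * ((m:ℝ)+1) + B * ((m:ℝ)+2) * T) := by linarith
  rw [hβ₂']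
  have hTm2 : T ^ (m+2) = T ^ (m+1) * T := by ring
  linear_combination ((m:ℝ)+2) * h1 + hBeq
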